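/- Let M be a matroid and let C₁, C₂ be distinct circuits of M. Then C₁, C₂ form a modular pair if and only if there exist a basis B of M and distinct elements e₁, e₂ ∈ E \ B such that C₁ = C(B, e₁) and C₂ = C(B, e₂), where C(B, e) denotes the fundamental circuit of e with respect to B. -/

import Mathlib

open Set

variable {α : Type*}

/-- A circuit of a matroid: a minimal dependent set. -/
def Matroid.IsCircuit' (M : Matroid α) (C : Set α) : Prop :=
  M.Dep C ∧ ∀ D, D ⊂ C → ¬ M.Dep D

/-- The rank (in `ℕ∞`) of a set in a matroid: the supremum of the cardinalities
of independent subsets. -/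
noncomputable def Matroid.rk' (M : Matroid α) (X : Set α) : ℕ∞ :=
  ⨆ I : {I : Set α // M.Indep I ∧ I ⊆ X}, (I : Set α).encard

/-- Two distinct circuits `C₁, C₂` form a modular pair if `C₁ ∪ C₂` does not
properly contain the union of two distinct circuits of `M`. -/
def Matroid.ModularPairOfCircuits (M : Matroid α) (C₁ C₂ : Set α) : Prop :=
  C₁ ≠ C₂ ∧ ∀ D₁ D₂, M.IsCircuit' D₁ → M.IsCircuit' D₂ → D₁ ≠ D₂ →
    ¬ (D₁ ∪ D₂ ⊂ C₁ ∪ C₂)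

lemma circuit_not_subset_indep {M : Matroid α} {C I : Set α}
    (hC : M.IsCircuit' C) (hI : M.Indep I) : ¬ C ⊆ I :=
  fun h => hC.1.1 (hI.subset h)

/-- Any finite dependent set contains a circuit. -/
lemma exists_circuit_subset {M : Matroid α} {X : Set α} (hX : X.Finite)
    (hdep : M.Dep X) : ∃ C, C ⊆ X ∧ M.IsCircuit' C := by
  obtain ⟨C, ⟨hCX, hC⟩, hmin⟩ :=
    Set.Finite.exists_minimal (s := {D | D ⊆ X ∧ M.Dep D})
      (hX.finite_subsets.subset (fun D hD => hD.1)) ⟨X, Subset.rfl, hdep⟩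
  refine ⟨C, hCX, hC, fun D hD hDdep => ?_⟩
  have := hmin ⟨hD.subset.trans hCX, hDdep⟩ hD.subset
  exact hD.ne (hD.subset.antisymm this)

lemma circuit_diff_indep {M : Matroid α} {C : Set α} {x : α}
    (hC : M.IsCircuit' C) (hx : x ∈ C) : M.Indep (C \ {x}) := by
  have hss : C \ {x} ⊂ C := sdiff_singleton_ssubset.2 hx
  have hnd := hC.2 _ hss
  by_contra hni
  exact hnd ⟨hni, diff_subset.trans hC.1.subset_ground⟩

lemma circuit_mem_closure_diff {M : Matroid α} {C : Set α} {x : α}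
    (hC : M.IsCircuit' C) (hx : x ∈ C) : x ∈ M.closure (C \ {x}) := by
  have hI := circuit_diff_indep hC hx
  rw [hI.mem_closure_iff_of_notMem (by simp), insert_diff_singleton, insert_eq_self.2 hx]
  exact hC.1

/-- Circuit elimination. -/
lemma circuit_elim {M : Matroid α} (hE : M.E.Finite) {C₁ C₂ : Set α} {e : α}
    (h₁ : M.IsCircuit' C₁) (h₂ : M.IsCircuit' C₂) (hne : C₁ ≠ C₂)
    (he₁ : e ∈ C₁) (he₂ : e ∈ C₂) :
    ∃ C, C ⊆ (C₁ ∪ C₂) \ {e} ∧ M.IsCircuit' C := by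
  have hCE : C₁ ∪ C₂ ⊆ M.E := union_subset h₁.1.subset_ground h₂.1.subset_ground
  suffices hd : M.Dep ((C₁ ∪ C₂) \ {e}) by
    exact exists_circuit_subset ((hE.subset hCE).subset diff_subset) hd
  have hnsub : ¬ C₁ ⊆ C₂ := fun h => h₂.2 C₁ (h.ssubset_of_ne hne) h₁.1
  obtain ⟨f, hfC₁, hfC₂⟩ := not_subset.1 hnsub
  by_contra hni
  have hXE : (C₁ ∪ C₂) \ {e} ⊆ M.E := diff_subset.trans hCE
  have hX : M.Indep ((C₁ ∪ C₂) \ {e}) := by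
    by_contra h; exact hni ⟨h, hXE⟩
  set J : Set α := ((C₁ ∪ C₂) \ {e}) \ {f} with hJ
  have hfX : f ∈ (C₁ ∪ C₂) \ {e} := ⟨Or.inl hfC₁, fun h => hfC₂ (h ▸ he₂)⟩
  have hfJ : f ∉ M.closure J := hX.notMem_closure_diff_of_mem hfX
  apply hfJ
  have heJ : e ∈ M.closure J := by
    have h1 : C₂ \ {e} ⊆ J := fun y hy =>
      ⟨⟨Or.inr hy.1, hy.2⟩, fun h => hfC₂ (h ▸ hy.1)⟩
    exact M.closure_subset_closure h1 (circuit_mem_closure_diff h₂ he₂)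
  have h2 : C₁ \ {f} ⊆ M.closure J := by
    intro y hy
    by_cases hye : y = e
    · exact hye ▸ heJ
    · exact M.subset_closure J (diff_subset.trans hXE) ⟨⟨Or.inl hy.1, hye⟩, hy.2⟩
  exact M.closure_subset_closure_of_subset_closure h2 (circuit_mem_closure_diff h₁ hfC₁)

/-- Uniqueness of the fundamental circuit. -/
lemma fund_circuit_unique {M : Matroid α} (hE : M.E.Finite) {I D₁ D₂ : Set α} {g : α}
    (hI : M.Indep I) (h₁ : M.IsCircuit' D₁) (h₂ : M.IsCircuit' D₂)
    (hs₁ : D₁ ⊆ insert g I) (hs₂ : D₂ ⊆ insert g I) : D₁ = D₂ := by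
  by_contra hne
  have hg₁ : g ∈ D₁ := by
    by_contra hg
    exact circuit_not_subset_indep h₁ hI
      (fun y hy => (hs₁ hy).resolve_left (fun h => hg (h ▸ hy)))
  have hg₂ : g ∈ D₂ := by
    by_contra hg
    exact circuit_not_subset_indep h₂ hI
      (fun y hy => (hs₂ hy).resolve_left (fun h => hg (h ▸ hy)))
  obtain ⟨C, hCs, hC⟩ := circuit_elim hE h₁ h₂ hne hg₁ hg₂
  refine circuit_not_subset_indep hC hI (fun y hy => ?_)
  obtain ⟨hyu, hyg⟩ := hCs hy
  rcases hyu with hy' | hy'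
  · exact (hs₁ hy').resolve_left (fun h => hyg h)
  · exact (hs₂ hy').resolve_left (fun h => hyg h)

/-- If two distinct circuits inside `B ∪ {e₁, e₂}` both contain `e₁`, then the
fundamental circuit `C₂ ⊆ insert e₂ B` is contained in their union. -/
lemma key_sub {M : Matroid α} (hE : M.E.Finite) {B C₂ D₁ D₂ : Set α} {e₁ e₂ : α}
    (hB : M.Indep B) (h₂ : M.IsCircuit' C₂) (hC₂ : C₂ ⊆ insert e₂ B)
    (hD₁ : M.IsCircuit' D₁) (hD₂ : M.IsCircuit' D₂) (hDne : D₁ ≠ D₂)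
    (hs₁ : D₁ ⊆ insert e₁ (insert e₂ B)) (hs₂ : D₂ ⊆ insert e₁ (insert e₂ B))
    (he₁ : e₁ ∈ D₁) (he₂ : e₁ ∈ D₂) : C₂ ⊆ D₁ ∪ D₂ := by
  obtain ⟨C, hCs, hC⟩ := circuit_elim hE hD₁ hD₂ hDne he₁ he₂
  have hCsub : C ⊆ insert e₂ B := by
    intro y hy
    obtain ⟨hyu, hye⟩ := hCs hy
    rcases hyu with hy' | hy'
    · exact (hs₁ hy').resolve_left (fun h => hye h)
    · exact (hs₂ hy').resolve_left (fun h => hye h)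
  have h := fund_circuit_unique hE hB h₂ hC hC₂ hCsub
  exact h ▸ (hCs.trans diff_subset)

/-- Distinct circuits `C₁, C₂` of a matroid form a modular pair iff they are the
fundamental circuits `C(B, e₁)`, `C(B, e₂)` of two distinct elements
`e₁, e₂ ∈ E \ B` with respect to a common basis `B`.  (The fundamental circuit
`C(B, e)` is the unique circuit contained in `B ∪ {e}`.) -/
theorem modularPair_iff_fundCircuits (M : Matroid α) (hE : M.E.Finite)
    (C₁ C₂ : Set α) (h₁ : M.IsCircuit' C₁) (h₂ : M.IsCircuit' C₂) (hne : C₁ ≠ C₂) :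
    M.ModularPairOfCircuits C₁ C₂ ↔
      ∃ B e₁ e₂, M.IsBase B ∧ e₁ ∈ M.E \ B ∧ e₂ ∈ M.E \ B ∧ e₁ ≠ e₂ ∧
        C₁ ⊆ insert e₁ B ∧ C₂ ⊆ insert e₂ B := by
  have hC₁E : C₁ ⊆ M.E := h₁.1.subset_ground
  have hC₂E : C₂ ⊆ M.E := h₂.1.subset_ground
  have hUE : C₁ ∪ C₂ ⊆ M.E := union_subset hC₁E hC₂E
  constructor
  · rintro ⟨-, hmod⟩
    have hnsub : ¬ C₁ ⊆ C₂ := fun h => h₂.2 C₁ (h.ssubset_of_ne hne) h₁.1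
    obtain ⟨f, hfC₁, hfC₂⟩ := not_subset.1 hnsub
    obtain ⟨I, hI, hsubI⟩ := (circuit_diff_indep h₁ hfC₁).subset_isBasis_of_subset
      (diff_subset.trans subset_union_left) hUE
    have hIind : M.Indep I := hI.indep
    have hIsub : I ⊆ C₁ ∪ C₂ := hI.subset
    have hfI : f ∉ I := by
      intro hf
      exact circuit_not_subset_indep h₁ hIind (fun y hy => by
        by_cases hyf : y = f
        · exact hyf ▸ hf
        · exact hsubI ⟨hy, hyf⟩)
    obtain ⟨e₂, he₂C₂, he₂I⟩ := not_subset.1 (circuit_not_subset_indep h₂ hIind)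
    have hfe₂ : f ≠ e₂ := fun h => hfC₂ (h ▸ he₂C₂)
    have hfund : ∀ g ∈ (C₁ ∪ C₂) \ I, ∃ D, M.IsCircuit' D ∧ D ⊆ insert g I ∧ g ∈ D := by
      rintro g ⟨hgU, hgI⟩
      have hdep : M.Dep (insert g I) := by
        rw [hIind.insert_dep_iff]
        exact ⟨hI.subset_closure hgU, hgI⟩
      obtain ⟨D, hDs, hD⟩ := exists_circuit_subset (hE.subset hdep.subset_ground) hdep
      refine ⟨D, hD, hDs, ?_⟩
      by_contra hg
      exact circuit_not_subset_indep hD hIind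
        (fun y hy => (hDs hy).resolve_left (fun h => hg (h ▸ hy)))
    have hcompl : (C₁ ∪ C₂) \ I ⊆ {f, e₂} := by
      rintro z ⟨hzU, hzI⟩
      by_contra hz
      simp only [mem_insert_iff, mem_singleton_iff, not_or] at hz
      obtain ⟨hzf, hze₂⟩ := hz
      obtain ⟨D₁, hD₁, hD₁s, hfD₁⟩ := hfund f ⟨Or.inl hfC₁, hfI⟩
      obtain ⟨D₂, hD₂, hD₂s, he₂D₂⟩ := hfund e₂ ⟨Or.inr he₂C₂, he₂I⟩
      have hDne : D₁ ≠ D₂ := by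
        intro h
        rcases hD₂s (h ▸ hfD₁) with h' | h'
        · exact hfe₂ h'
        · exact hfI h'
      refine hmod D₁ D₂ hD₁ hD₂ hDne ?_
      rw [Set.ssubset_def]
      refine ⟨union_subset (hD₁s.trans (insert_subset (Or.inl hfC₁) hIsub))
        (hD₂s.trans (insert_subset (Or.inr he₂C₂) hIsub)), fun hsub => ?_⟩
      rcases hsub hzU with hz' | hz'
      · rcases hD₁s hz' with h | h
        · exact hzf h
        · exact hzI h
      · rcases hD₂s hz' with h | h
        · exact hze₂ h
        · exact hzI h
    have he₂C₁ : e₂ ∉ C₁ := fun h => he₂I (hsubI ⟨h, fun h' => hfe₂ h'.symm⟩)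
    have hC₁I : C₁ ⊆ insert f I := by
      intro y hy
      by_cases hyI : y ∈ I
      · exact Or.inr hyI
      · rcases hcompl ⟨Or.inl hy, hyI⟩ with h | h
        · exact Or.inl h
        · exact absurd (h ▸ hy) he₂C₁
    have hC₂I : C₂ ⊆ insert e₂ I := by
      intro y hy
      by_cases hyI : y ∈ I
      · exact Or.inr hyI
      · rcases hcompl ⟨Or.inr hy, hyI⟩ with h | h
        · exact absurd (h ▸ hy) hfC₂
        · exact Or.inl h
    obtain ⟨B, hB, hIB⟩ := hIind.exists_isBase_superset
    have hnotB : ∀ g, g ∈ C₁ ∪ C₂ → g ∉ I → g ∉ B := by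
      intro g hgU hgI hgB
      have hgcl : g ∈ M.closure I := hI.subset_closure hgU
      have : g ∈ M.closure (B \ {g}) :=
        M.closure_subset_closure (show I ⊆ B \ {g} from fun y hy => ⟨hIB hy, fun h => hgI (h ▸ hy)⟩) hgcl
      exact hB.indep.notMem_closure_diff_of_mem hgB this
    exact ⟨B, f, e₂, hB, ⟨hC₁E hfC₁, hnotB f (Or.inl hfC₁) hfI⟩,
      ⟨hC₂E he₂C₂, hnotB e₂ (Or.inr he₂C₂) he₂I⟩, hfe₂,
      hC₁I.trans (insert_subset_insert hIB), hC₂I.trans (insert_subset_insert hIB)⟩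
  · rintro ⟨B, e₁, e₂, hB, ⟨-, he₁B⟩, ⟨-, he₂B⟩, hee, hC₁, hC₂⟩
    have hBind : M.Indep B := hB.indep
    have he₁C₁ : e₁ ∈ C₁ := by
      by_contra h
      exact circuit_not_subset_indep h₁ hBind
        (fun y hy => (hC₁ hy).resolve_left (fun h' => h (h' ▸ hy)))
    have he₂C₂ : e₂ ∈ C₂ := by
      by_contra h
      exact circuit_not_subset_indep h₂ hBind
        (fun y hy => (hC₂ hy).resolve_left (fun h' => h (h' ▸ hy)))
    have he₂C₁ : e₂ ∉ C₁ := fun h => by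
      rcases hC₁ h with h' | h'
      · exact hee h'.symm
      · exact he₂B h'
    have he₁C₂ : e₁ ∉ C₂ := fun h => by
      rcases hC₂ h with h' | h'
      · exact hee h'
      · exact he₁B h'
    have hU : C₁ ∪ C₂ ⊆ insert e₁ (insert e₂ B) := by
      refine union_subset (hC₁.trans (insert_subset_insert (subset_insert _ _))) ?_
      intro y hy
      rcases hC₂ hy with h | h
      · exact Or.inr (Or.inl h)
      · exact Or.inr (Or.inr h)
    have hC₁s' : C₁ ⊆ insert e₁ (insert e₂ B) :=
      hC₁.trans (insert_subset_insert (subset_insert _ _))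
    have hC₂s' : C₂ ⊆ insert e₂ (insert e₁ B) :=
      hC₂.trans (insert_subset_insert (subset_insert _ _))
    refine ⟨hne, fun D₁ D₂ hD₁ hD₂ hDne hss => ?_⟩
    have hsD₁ : D₁ ⊆ insert e₁ (insert e₂ B) := subset_union_left.trans (hss.subset.trans hU)
    have hsD₂ : D₂ ⊆ insert e₁ (insert e₂ B) := subset_union_right.trans (hss.subset.trans hU)
    have hsD₁' : D₁ ⊆ insert e₂ (insert e₁ B) := by rw [insert_comm]; exact hsD₁
    have hsD₂' : D₂ ⊆ insert e₂ (insert e₁ B) := by rw [insert_comm]; exact hsD₂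
    have isC₁ : ∀ D, M.IsCircuit' D → D ⊆ insert e₁ (insert e₂ B) → e₂ ∉ D → D = C₁ := by
      intro D hD hDs he₂D
      refine fund_circuit_unique hE hBind hD h₁ (fun y hy => ?_) hC₁
      rcases hDs hy with h | h
      · exact Or.inl h
      · rcases h with h | h
        · exact absurd (h ▸ hy) he₂D
        · exact Or.inr h
    have isC₂ : ∀ D, M.IsCircuit' D → D ⊆ insert e₁ (insert e₂ B) → e₁ ∉ D → D = C₂ := by
      intro D hD hDs he₁D
      refine fund_circuit_unique hE hBind hD h₂ (fun y hy => ?_) hC₂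
      rcases hDs hy with h | h
      · exact absurd (h ▸ hy) he₁D
      · exact h
    suffices h : C₁ ⊆ D₁ ∪ D₂ ∧ C₂ ⊆ D₁ ∪ D₂ from
      hss.not_subset (union_subset h.1 h.2)
    by_cases h12 : e₂ ∈ D₁
    · by_cases h22 : e₂ ∈ D₂
      · -- both contain e₂
        have hC₁u : C₁ ⊆ D₁ ∪ D₂ :=
          key_sub hE hBind h₁ hC₁ hD₁ hD₂ hDne hsD₁' hsD₂' h12 h22
        by_cases h11 : e₁ ∈ D₁
        · by_cases h21 : e₁ ∈ D₂
          · exact ⟨hC₁u, key_sub hE hBind h₂ hC₂ hD₁ hD₂ hDne hsD₁ hsD₂ h11 h21⟩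
          · have hD₂C₂ : D₂ = C₂ := isC₂ D₂ hD₂ hsD₂ h21
            exact ⟨hC₁u, hD₂C₂ ▸ subset_union_right⟩
        · have hD₁C₂ : D₁ = C₂ := isC₂ D₁ hD₁ hsD₁ h11
          exact ⟨hC₁u, hD₁C₂ ▸ subset_union_left⟩
      · -- e₂ ∈ D₁, e₂ ∉ D₂ : D₂ = C₁
        have hD₂C₁ : D₂ = C₁ := isC₁ D₂ hD₂ hsD₂ h22
        by_cases h11 : e₁ ∈ D₁
        · have hne' : D₁ ≠ C₁ := fun h => he₂C₁ (h ▸ h12)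
          have hsub : C₂ ⊆ D₁ ∪ C₁ :=
            key_sub hE hBind h₂ hC₂ hD₁ h₁ hne' hsD₁ hC₁s' h11 he₁C₁
          refine ⟨hD₂C₁ ▸ subset_union_right, fun y hy => ?_⟩
          rcases hsub hy with h | h
          · exact Or.inl h
          · exact Or.inr (hD₂C₁ ▸ h)
        · have hD₁C₂ : D₁ = C₂ := isC₂ D₁ hD₁ hsD₁ h11
          exact ⟨hD₂C₁ ▸ subset_union_right, hD₁C₂ ▸ subset_union_left⟩
    · -- e₂ ∉ D₁ : D₁ = C₁
      have hD₁C₁ : D₁ = C₁ := isC₁ D₁ hD₁ hsD₁ h12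
      by_cases h22 : e₂ ∈ D₂
      · by_cases h21 : e₁ ∈ D₂
        · have hne' : D₂ ≠ C₁ := fun h => he₂C₁ (h ▸ h22)
          have hsub : C₂ ⊆ D₂ ∪ C₁ :=
            key_sub hE hBind h₂ hC₂ hD₂ h₁ hne' hsD₂ hC₁s' h21 he₁C₁
          refine ⟨hD₁C₁ ▸ subset_union_left, fun y hy => ?_⟩
          rcases hsub hy with h | h
          · exact Or.inr h
          · exact Or.inl (hD₁C₁ ▸ h)
        · have hD₂C₂ : D₂ = C₂ := isC₂ D₂ hD₂ hsD₂ h21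
          exact ⟨hD₁C₁ ▸ subset_union_left, hD₂C₂ ▸ subset_union_right⟩
      · exact absurd (hD₁C₁.trans (isC₁ D₂ hD₂ hsD₂ h22).symm) hDne
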